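/- arXiv:1806.02810 — 12 statements merged into one kernel-verified Lean document; each statement's English description precedes it below -/
import Mathlib

section
/- Let f be a uniform equivalence (bijection, uniformly continuous with uniformly continuous inverse) of a metric space X and μ a non-atomic Borel measure on X. Then μ is pointwise expansive for f if and only if for every nontrivial subgroup H of ℤ, μ is pointwise expansive for f through H. -/
open MeasureTheory

/-- The set of points whose full `ℤ`-orbit stays `δ`-close to that of `x`. -/
def Gamma {X : Type*} [MetricSpace X] (f : Equiv.Perm X) (δ : ℝ) (x : X) : Set X :=
  {y | ∀ n : ℤ, dist ((f ^ n) x) ((f ^ n) y) ≤ δ}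

/-- The set of points whose orbit through times in `H` stays `δ`-close to that of `x`. -/
def GammaThrough {X : Type*} [MetricSpace X] (f : Equiv.Perm X) (H : Set ℤ) (δ : ℝ) (x : X) :
    Set X :=
  {y | ∀ n ∈ H, dist ((f ^ n) x) ((f ^ n) y) ≤ δ}

lemma uc_pow {X : Type*} [MetricSpace X] (f : Equiv.Perm X) (hf : UniformContinuous f)
    (n : ℕ) : UniformContinuous ⇑(f ^ n) := by
  induction n with
  | zero => simpa using uniformContinuous_id
  | succ k ih =>
    have : ⇑(f ^ (k + 1)) = ⇑(f ^ k) ∘ ⇑f := by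
      funext x; simp [pow_succ, Equiv.Perm.mul_apply]
    rw [this]
    exact ih.comp hf

theorem stmt_0 {X : Type*} [MetricSpace X] [MeasurableSpace X] [BorelSpace X]
    (f : Equiv.Perm X) (hf : UniformContinuous f) (hf' : UniformContinuous f.symm)
    (μ : Measure X) (hμ : ∀ x : X, μ {x} = 0) :
    (∀ x : X, ∃ δ > 0, μ (Gamma f δ x) = 0) ↔
      ∀ H : AddSubgroup ℤ, H ≠ ⊥ →
        ∀ x : X, ∃ δ > 0, μ (GammaThrough f (H : Set ℤ) δ x) = 0 := by
  constructor
  · intro h H hH x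
    -- get a positive element of H
    obtain ⟨m, hmH, hm0⟩ : ∃ m ∈ H, m ≠ 0 := by
      by_contra hc
      push_neg at hc
      exact hH ((AddSubgroup.eq_bot_iff_forall H).2 hc)
    obtain ⟨m, hmH, hmpos⟩ : ∃ m ∈ H, 0 < m := by
      rcases lt_trichotomy m 0 with h1 | h1 | h1
      · exact ⟨-m, H.neg_mem hmH, by omega⟩
      · exact absurd h1 hm0
      · exact ⟨m, hmH, h1⟩
    obtain ⟨δ, hδ, hδ0⟩ := h x
    -- uniform modulus for all powers below m.toNat
    have key : ∀ N : ℕ, ∃ ε > 0, ∀ a b : X, dist a b ≤ ε →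
        ∀ r < N, dist ((f ^ r) a) ((f ^ r) b) ≤ δ := by
      intro N
      induction N with
      | zero => exact ⟨1, one_pos, fun a b _ r hr => absurd hr (Nat.not_lt_zero r)⟩
      | succ k ih =>
        obtain ⟨ε, hε, hεp⟩ := ih
        obtain ⟨η, hη, hηp⟩ := Metric.uniformContinuous_iff.1 (uc_pow f hf k) δ hδ
        refine ⟨min ε (η / 2), by positivity, fun a b hab r hr => ?_⟩
        rcases Nat.lt_succ_iff_lt_or_eq.1 hr with h1 | h1
        · exact hεp a b (hab.trans (min_le_left _ _)) r h1
        · subst h1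
          exact le_of_lt (hηp (lt_of_le_of_lt (hab.trans (min_le_right _ _)) (by linarith)))
    obtain ⟨ε, hε, hεp⟩ := key m.toNat
    refine ⟨ε, hε, measure_mono_null ?_ hδ0⟩
    intro y hy
    intro n
    -- write n = m * (n / m) + n % m
    have hmem : m * (n / m) ∈ H := by
      have := AddSubgroup.zsmul_mem H hmH (n / m)
      simpa [smul_eq_mul, mul_comm] using this
    have hdist : dist ((f ^ (m * (n / m))) x) ((f ^ (m * (n / m))) y) ≤ ε :=
      hy _ hmem
    have hr0 : 0 ≤ n % m := Int.emod_nonneg n (by omega)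
    have hrm : n % m < m := Int.emod_lt_of_pos n hmpos
    have hsplit : (f ^ n) = (f ^ ((n % m).toNat)) * (f ^ (m * (n / m))) := by
      have : f ^ n = f ^ ((n % m) + m * (n / m)) := by
        rw [Int.emod_add_mul_ediv n m]
      rw [this, zpow_add]
      congr 1
      rw [← zpow_natCast]
      congr 1
      omega
    have := hεp _ _ hdist ((n % m).toNat) (by omega)
    calc dist ((f ^ n) x) ((f ^ n) y)
        = dist ((f ^ ((n % m).toNat)) ((f ^ (m * (n / m))) x))
            ((f ^ ((n % m).toNat)) ((f ^ (m * (n / m))) y)) := by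
          rw [hsplit]; rfl
      _ ≤ δ := this
  · intro h x
    obtain ⟨δ, hδ, h0⟩ := h ⊤ (by simp) x
    refine ⟨δ, hδ, measure_mono_null ?_ h0⟩
    intro y hy n _
    exact hy n
end

section
/- Let f be a uniform equivalence of a metric space X and μ a non-atomic Borel measure. Then μ is pointwise expansive for f if and only if μ is pointwise expansive for f^m for any nonzero integer m. -/
open MeasureTheory

/-- `μ` is pointwise expansive for `f`. -/
def PointwiseExpansiveMeasure {X : Type*} [MetricSpace X] [MeasurableSpace X]
    (f : Equiv.Perm X) (μ : Measure X) : Prop :=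
  ∀ x : X, ∃ δ > 0, μ (Gamma f δ x) = 0

lemma ucont_npow {X : Type*} [MetricSpace X] (g : Equiv.Perm X)
    (hg : UniformContinuous g) : ∀ n : ℕ, UniformContinuous ⇑(g ^ n) := by
  intro n
  induction n with
  | zero => simpa using uniformContinuous_id
  | succ n ih =>
      have : ⇑(g ^ (n + 1)) = ⇑(g ^ n) ∘ ⇑g := by
        ext x; simp [pow_succ, Equiv.Perm.mul_apply]
      rw [this]; exact ih.comp hg

lemma ucont_zpow {X : Type*} [MetricSpace X] (f : Equiv.Perm X)
    (hf : UniformContinuous f) (hf' : UniformContinuous f.symm) (k : ℤ) :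
    UniformContinuous ⇑(f ^ k) := by
  rcases Int.natAbs_eq k with h | h
  · rw [h, zpow_natCast]; exact ucont_npow f hf k.natAbs
  · rw [h, zpow_neg, zpow_natCast, ← inv_pow]
    have hinv : ⇑(f⁻¹) = ⇑f.symm := rfl
    exact ucont_npow f⁻¹ (by rw [hinv]; exact hf') k.natAbs

/-- uniform continuity of finitely many iterates, with a common modulus -/
lemma common_eps {X : Type*} [MetricSpace X] (f : Equiv.Perm X)
    (hf : UniformContinuous f) (hf' : UniformContinuous f.symm)
    {δ : ℝ} (hδ : 0 < δ) (N : ℕ) :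
    ∃ ε > 0, ∀ k : ℕ, k < N → ∀ a b : X,
      dist a b ≤ ε → dist ((f ^ (k : ℤ)) a) ((f ^ (k : ℤ)) b) ≤ δ := by
  induction N with
  | zero => exact ⟨1, one_pos, fun k hk => absurd hk (Nat.not_lt_zero k)⟩
  | succ N ih =>
      obtain ⟨ε, hε, hεN⟩ := ih
      have hU := ucont_zpow f hf hf' (N : ℤ)
      rw [Metric.uniformContinuous_iff] at hU
      obtain ⟨η, hη, hηd⟩ := hU δ hδ
      refine ⟨min ε (η / 2), lt_min hε (by linarith), fun k hk a b hab => ?_⟩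
      rcases Nat.lt_succ_iff_lt_or_eq.mp hk with hk' | hk'
      · exact hεN k hk' a b (hab.trans (min_le_left _ _))
      · subst hk'
        have : dist a b < η := lt_of_le_of_lt (hab.trans (min_le_right _ _)) (by linarith)
        exact (hηd this).le

lemma gamma_subset {X : Type*} [MetricSpace X] (f : Equiv.Perm X)
    (hf : UniformContinuous f) (hf' : UniformContinuous f.symm)
    {m : ℤ} (hm : m ≠ 0) {δ : ℝ} (hδ : 0 < δ) (x : X) :
    ∃ ε > 0, Gamma (f ^ m) ε x ⊆ Gamma f δ x := by
  obtain ⟨ε, hε, hεd⟩ := common_eps f hf hf' hδ m.natAbs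
  refine ⟨ε, hε, fun y hy n => ?_⟩
  set q := n / m with hq
  set r := n % m with hr
  have hr0 : 0 ≤ r := Int.emod_nonneg n hm
  have hrlt : r < |m| := by
    have := Int.emod_lt n hm; rw [Int.abs_eq_natAbs]; exact this
  have hrlt' : r.toNat < m.natAbs := by
    rw [Int.abs_eq_natAbs] at hrlt
    omega
  have hn : n = r + m * q := by
    rw [hq, hr]; exact (Int.emod_add_mul_ediv n m).symm
  have key : ∀ z : X, (f ^ n) z = (f ^ (r.toNat : ℤ)) (((f ^ m) ^ q) z) := by
    intro z
    rw [Int.toNat_of_nonneg hr0, hn, zpow_add, ← zpow_mul, Equiv.Perm.mul_apply]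
  rw [key x, key y]
  exact hεd r.toNat hrlt' _ _ (hy q)

theorem stmt_1 {X : Type*} [MetricSpace X] [MeasurableSpace X] [BorelSpace X]
    (f : Equiv.Perm X) (hf : UniformContinuous f) (hf' : UniformContinuous f.symm)
    (μ : Measure X) (hμ : ∀ x : X, μ {x} = 0) :
    PointwiseExpansiveMeasure f μ ↔
      ∀ m : ℤ, m ≠ 0 → PointwiseExpansiveMeasure (f ^ m) μ := by
  constructor
  · intro h m hm x
    obtain ⟨δ, hδ, hnull⟩ := h x
    obtain ⟨ε, hε, hsub⟩ := gamma_subset f hf hf' hm hδ x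
    exact ⟨ε, hε, measure_mono_null hsub hnull⟩
  · intro h
    have h1 := h 1 one_ne_zero
    rwa [zpow_one] at h1
end

section
/- Let f be a bi-measurable map on a compact metric space X, and μ a non-atomic Borel measure on X. Then μ is pointwise expansive for f if and only if f has a pointwise μ-generator. -/
open MeasureTheory

/-- `Λ` is a finite open cover of `X` which is a `μ`-generator at `x` for `f`: for any
bi-sequence of members of `Λ` whose closures contain the orbit of `x`, the intersection of the
pulled-back closures has measure zero. -/
def IsMuGeneratorAt {X : Type*} [MetricSpace X] [MeasurableSpace X]
    (f : Equiv.Perm X) (μ : Measure X) (Λ : Finset (Set X)) (x : X) : Prop :=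
  (∀ U ∈ Λ, IsOpen U) ∧ (⋃ U ∈ Λ, U) = Set.univ ∧
    ∀ U : ℤ → Set X, (∀ n, U n ∈ Λ) → (∀ n, (f ^ n) x ∈ closure (U n)) →
      μ (⋂ n : ℤ, (fun y => (f ^ n) y) ⁻¹' closure (U n)) = 0
open scoped Classical in

theorem stmt_2 {X : Type*} [MetricSpace X] [CompactSpace X] [MeasurableSpace X] [BorelSpace X]
    (f : Equiv.Perm X) (μ : Measure X) (hμ : ∀ x : X, μ {x} = 0) :
    (∀ x : X, ∃ δ > 0, μ (Gamma f δ x) = 0) ↔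
      ∀ x : X, ∃ Λ : Finset (Set X), IsMuGeneratorAt f μ Λ x := by
  constructor
  · intro h x
    obtain ⟨δ, hδ, hμ0⟩ := h x
    obtain ⟨t, ht⟩ := isCompact_univ.elim_finite_subcover
      (fun c : X => Metric.ball c (δ / 4)) (fun c => Metric.isOpen_ball)
      (fun z _ => Set.mem_iUnion.2 ⟨z, Metric.mem_ball_self (by linarith)⟩)
    refine ⟨t.image (fun c => Metric.ball c (δ / 4)), ?_, ?_, ?_⟩
    · intro U hU
      obtain ⟨c, _, rfl⟩ := Finset.mem_image.1 hU
      exact Metric.isOpen_ball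
    · apply Set.eq_univ_of_univ_subset
      intro z hz
      obtain ⟨c, hc, hz'⟩ := Set.mem_iUnion₂.1 (ht (Set.mem_univ z))
      exact Set.mem_iUnion₂.2 ⟨Metric.ball c (δ / 4), Finset.mem_image_of_mem _ hc, hz'⟩
    · intro U hU hx
      have hc : ∀ n : ℤ, ∃ c, c ∈ t ∧ U n = Metric.ball c (δ / 4) := by
        intro n
        obtain ⟨c, hct, hc⟩ := Finset.mem_image.1 (hU n)
        exact ⟨c, hct, hc.symm⟩
      choose c hct hU' using hc
      refine measure_mono_null (fun y hy => ?_) hμ0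
      intro n
      have h1 : (f ^ n) x ∈ Metric.closedBall (c n) (δ / 4) :=
        Metric.closure_ball_subset_closedBall (by rw [← hU']; exact hx n)
      have h2 : (f ^ n) y ∈ Metric.closedBall (c n) (δ / 4) :=
        Metric.closure_ball_subset_closedBall (by rw [← hU']; exact Set.mem_iInter.1 hy n)
      calc dist ((f ^ n) x) ((f ^ n) y)
          ≤ dist ((f ^ n) x) (c n) + dist (c n) ((f ^ n) y) := dist_triangle _ _ _
        _ ≤ δ / 4 + δ / 4 := add_le_add h1 (by rw [dist_comm]; exact h2)
        _ ≤ δ := by linarith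
  · intro h x
    obtain ⟨Λ, hopen, hcover, hgen⟩ := h x
    obtain ⟨δ, hδ, hball⟩ := lebesgue_number_lemma_of_metric (s := (Set.univ : Set X))
      (c := fun U : Λ => (U : Set X)) isCompact_univ (fun U => hopen U U.2)
      (by intro z _
          have : z ∈ (⋃ U ∈ Λ, U) := hcover ▸ Set.mem_univ z
          obtain ⟨U, hU, hz⟩ := Set.mem_iUnion₂.1 this
          exact Set.mem_iUnion.2 ⟨⟨U, hU⟩, hz⟩)
    have hsel : ∀ n : ℤ, ∃ U : Λ, Metric.ball ((f ^ n) x) δ ⊆ (U : Set X) :=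
      fun n => hball _ (Set.mem_univ _)
    choose U hUb using hsel
    refine ⟨δ / 2, by linarith, ?_⟩
    have h0 := hgen (fun n => (U n : Set X)) (fun n => (U n).2)
      (fun n => subset_closure (hUb n (Metric.mem_ball_self hδ)))
    refine measure_mono_null (fun y hy => Set.mem_iInter.2 fun n => ?_) h0
    exact subset_closure (hUb n (by
      show dist ((f ^ n) y) ((f ^ n) x) < δ
      rw [dist_comm]
      exact lt_of_le_of_lt (hy n) (by linarith)))
end

section
/- A uniform equivalence f of a separable metric space X is aperiodic with respect to any pointwise expansive measure μ for f: if B ⊆ X is measurable and there is n ≥ 1 with fⁿ(x) = x for all x ∈ B, then μ(B) = 0. -/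
open MeasureTheory

theorem stmt_6 {X : Type*} [MetricSpace X] [TopologicalSpace.SeparableSpace X]
    [MeasurableSpace X] [BorelSpace X]
    (f : Equiv.Perm X) (hf : UniformContinuous f) (hf' : UniformContinuous f.symm)
    (μ : Measure X) (hμna : ∀ x : X, μ {x} = 0)
    (hexp : ∀ x : X, ∃ δ > 0, μ (Gamma f δ x) = 0)
    (B : Set X) (hB : MeasurableSet B) (n : ℕ) (hn : 1 ≤ n)
    (hper : ∀ x ∈ B, (f ^ (n : ℤ)) x = x) :
    μ B = 0 := by
  haveI : SecondCountableTopology X :=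
    UniformSpace.secondCountable_of_separable X
  have hcont : ∀ k : ℕ, Continuous fun y : X => (f ^ (k : ℤ)) y := by
    intro k
    have : (f ^ (k : ℤ)) = f ^ k := zpow_natCast f k
    rw [this, show ⇑(f ^ k) = (⇑f)^[k] from Equiv.Perm.coe_pow f k]
    exact hf.continuous.iterate k
  refine measure_null_of_locally_null B fun x hx => ?_
  obtain ⟨δ, hδ, hΓ⟩ := hexp x
  set U : Set X := {y | ∀ k : ℕ, k < n → dist ((f ^ (k : ℤ)) x) ((f ^ (k : ℤ)) y) < δ}
    with hU
  have hUopen : IsOpen U := by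
    have : U = ⋂ k ∈ Finset.range n,
        (fun y : X => dist ((f ^ (k : ℤ)) x) ((f ^ (k : ℤ)) y)) ⁻¹' Set.Iio δ := by
      ext y; simp [hU, Set.mem_iInter]
    rw [this]
    exact isOpen_biInter_finset fun k _ =>
      (isOpen_Iio.preimage (continuous_const.dist (hcont k)))
  have hxU : x ∈ U := fun k _ => by simpa using hδ
  refine ⟨B ∩ U, ?_, ?_⟩
  · exact Filter.inter_mem self_mem_nhdsWithin
      (mem_nhdsWithin_of_mem_nhds (hUopen.mem_nhds hxU))
  · refine measure_mono_null ?_ hΓ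
    rintro y ⟨hyB, hyU⟩
    intro m
    -- reduce m modulo n
    obtain ⟨q, r, hr0, hrn, hm⟩ : ∃ q r : ℤ, 0 ≤ r ∧ r < (n : ℤ) ∧ m = (n : ℤ) * q + r :=
      ⟨m / n, m % n, Int.emod_nonneg m (by omega),
        Int.emod_lt_of_pos m (by exact_mod_cast hn), (Int.mul_ediv_add_emod m n).symm⟩
    have key : ∀ z : X, (f ^ (n : ℤ)) z = z → (f ^ m) z = (f ^ r) z := by
      intro z hz
      have : (f ^ m) z = (f ^ ((n : ℤ) * q)) ((f ^ r) z) := by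
        rw [hm, zpow_add, Equiv.Perm.mul_apply]
      rw [this, zpow_mul]
      have hfix : ((f ^ (n : ℤ))) ((f ^ r) z) = (f ^ r) z := by
        have : (f ^ (n : ℤ)) ((f ^ r) z) = (f ^ r) ((f ^ (n : ℤ)) z) := by
          rw [← Equiv.Perm.mul_apply, ← Equiv.Perm.mul_apply, ← zpow_add, ← zpow_add, add_comm]
        rw [this, hz]
      exact Equiv.Perm.zpow_apply_eq_self_of_apply_eq_self hfix q
    have hxfix := hper x hx
    have hyfix := hper y hyB
    rw [key x hxfix, key y hyfix]
    have hrk : r = ((r.toNat : ℕ) : ℤ) := (Int.toNat_of_nonneg hr0).symm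
    have hklt : r.toNat < n := by omega
    calc dist ((f ^ r) x) ((f ^ r) y)
        = dist ((f ^ ((r.toNat : ℕ) : ℤ)) x) ((f ^ ((r.toNat : ℕ) : ℤ)) y) := by rw [← hrk]
      _ ≤ δ := (hyU r.toNat hklt).le
end

section
/- Let f be a uniform equivalence of a separable metric space X and μ a pointwise expansive measure for f. Then the set Per(f) of periodic points of f has μ-measure zero. -/
open MeasureTheory

/-- The set of periodic points of `f`. -/
def PerSet {X : Type*} (f : Equiv.Perm X) : Set X :=
  {x | ∃ m : ℕ, 1 ≤ m ∧ (f ^ (m : ℤ)) x = x}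

theorem stmt_7 {X : Type*} [MetricSpace X] [TopologicalSpace.SeparableSpace X]
    [MeasurableSpace X] [BorelSpace X]
    (f : Equiv.Perm X) (hf : UniformContinuous f) (hf' : UniformContinuous f.symm)
    (μ : Measure X) (hμna : ∀ x : X, μ {x} = 0)
    (hexp : ∀ x : X, ∃ δ > 0, μ (Gamma f δ x) = 0) :
    μ (PerSet f) = 0 := by
  classical
  haveI : SecondCountableTopology X :=
    UniformSpace.secondCountable_of_separable X
  have hcont : ∀ n : ℕ, Continuous fun y : X => (f ^ (n : ℤ)) y := by
    intro n
    have h1 : (f ^ (n : ℤ)) = f ^ n := zpow_natCast f n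
    rw [h1]
    have h2 : ⇑(f ^ n) = (⇑f)^[n] := Equiv.Perm.coe_pow f n
    rw [h2]
    exact hf.continuous.iterate n
  have hFix : ∀ m : ℕ, 1 ≤ m → μ {x : X | (f ^ (m : ℤ)) x = x} = 0 := by
    intro m hm
    set F : Set X := {x : X | (f ^ (m : ℤ)) x = x} with hF
    apply measure_null_of_locally_null
    intro x hx
    obtain ⟨δ, hδ, h0⟩ := hexp x
    set U : Set X :=
      ⋂ n ∈ Finset.range m, {y : X | dist ((f ^ (n : ℤ)) x) ((f ^ (n : ℤ)) y) < δ} with hU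
    have hUopen : IsOpen U := by
      apply isOpen_biInter_finset
      intro n _
      have : {y : X | dist ((f ^ (n : ℤ)) x) ((f ^ (n : ℤ)) y) < δ}
          = (fun y => (f ^ (n : ℤ)) y) ⁻¹' Metric.ball ((f ^ (n : ℤ)) x) δ := by
        ext y; simp [Metric.mem_ball, dist_comm]
      rw [this]
      exact Metric.isOpen_ball.preimage (hcont n)
    have hxU : x ∈ U := by
      simp only [hU, Set.mem_iInter]
      intro n _
      simpa using hδ
    refine ⟨F ∩ U, inter_mem_nhdsWithin F (hUopen.mem_nhds hxU), ?_⟩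
    refine measure_mono_null ?_ h0
    rintro y ⟨hyF, hyU⟩
    intro n
    have hm0 : (m : ℤ) ≠ 0 := by exact_mod_cast Nat.one_le_iff_ne_zero.mp hm
    have key : ∀ z : X, (f ^ (m : ℤ)) z = z → (f ^ n) z = (f ^ (n % (m : ℤ))) z := by
      intro z hz
      have hper : (f ^ ((m : ℤ) * (n / (m : ℤ)))) z = z := by
        have h := (Function.IsFixedPt.perm_zpow hz (n / (m : ℤ)))
        rwa [← zpow_mul] at h
      conv_lhs => rw [← Int.emod_add_mul_ediv n m]
      rw [zpow_add]
      show (f ^ (n % (m : ℤ))) ((f ^ ((m : ℤ) * (n / (m : ℤ)))) z) = _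
      rw [hper]
    rw [key x hx, key y hyF]
    have hr0 : 0 ≤ n % (m : ℤ) := Int.emod_nonneg n hm0
    have hrm : n % (m : ℤ) < (m : ℤ) := Int.emod_lt_of_pos n (by exact_mod_cast hm)
    obtain ⟨r, hr⟩ := Int.eq_ofNat_of_zero_le hr0
    have hrlt : r < m := by omega
    have hyU' := Set.mem_iInter₂.mp hyU r (Finset.mem_range.mpr hrlt)
    rw [hr]
    exact le_of_lt hyU'
  have hsub : PerSet f ⊆ ⋃ m : ℕ, {x : X | 1 ≤ m ∧ (f ^ (m : ℤ)) x = x} := by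
    rintro x ⟨m, hm, hx⟩
    exact Set.mem_iUnion.mpr ⟨m, hm, hx⟩
  refine measure_mono_null hsub (measure_iUnion_null fun m => ?_)
  by_cases hm : 1 ≤ m
  · exact measure_mono_null (fun x hx => hx.2) (hFix m hm)
  · have : {x : X | 1 ≤ m ∧ (f ^ (m : ℤ)) x = x} = ∅ := by
      ext x; simp [hm]
    rw [this]; exact measure_empty
end

section
/- The set of periodic points of a pointwise measure expansive uniform equivalence of a separable complete metric space is at most countable. -/
open MeasureTheory

section aux
variable {X : Type*} [MetricSpace X]

omit [MetricSpace X] in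
lemma zpow_reduce (f : Equiv.Perm X) {m : ℕ} {x : X}
    (hx : (f ^ (m : ℤ)) x = x) (n : ℤ) : (f ^ n) x = (f ^ (n % (m : ℤ))) x := by
  have hmem : f ^ (m : ℤ) ∈ MulAction.stabilizer (Equiv.Perm X) x := hx
  have h3 : ((f ^ (m : ℤ)) ^ (n / (m : ℤ))) x = x :=
    (zpow_mem hmem (n / (m : ℤ)) : _ ∈ MulAction.stabilizer (Equiv.Perm X) x)
  have hsplit : f ^ n = f ^ (n % (m : ℤ)) * (f ^ (m : ℤ)) ^ (n / (m : ℤ)) := by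
    rw [← zpow_mul, ← zpow_add, Int.emod_add_mul_ediv]
  rw [hsplit, Equiv.Perm.mul_apply, h3]

end aux

theorem stmt_8 {X : Type*} [MetricSpace X] [TopologicalSpace.SeparableSpace X]
    [CompleteSpace X] [MeasurableSpace X] [BorelSpace X]
    (f : Equiv.Perm X) (hf : UniformContinuous f) (hf' : UniformContinuous f.symm)
    (hexp : ∀ x : X, ∃ δ > 0, ∀ μ : Measure X,
      (∀ z : X, μ {z} = 0) → μ (Gamma f δ x) = 0) :
    (PerSet f).Countable := by
  -- continuity of natural powers of f
  have hcont : ∀ k : ℕ, Continuous fun y : X => (f ^ (k : ℤ)) y := by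
    intro k
    have : (fun y : X => (f ^ (k : ℤ)) y) = f^[k] := by
      funext y
      rw [zpow_natCast, ← Equiv.Perm.iterate_eq_pow]
    rw [this]
    exact hf.continuous.iterate k
  have key : ∀ m : ℕ, 1 ≤ m → ({x : X | (f ^ (m : ℤ)) x = x}).Countable := by
    intro m hm
    by_contra hunc
    set S : Set X := {x : X | (f ^ (m : ℤ)) x = x} with hS
    have hSclosed : IsClosed S := isClosed_eq (hcont m) continuous_id
    have hSmeas : MeasurableSet S := hSclosed.measurableSet
    -- build a nonatomic measure on X giving S mass 1
    haveI : PolishSpace X := inferInstance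
    haveI : PolishSpace S := hSclosed.polishSpace
    haveI : BorelSpace S := Subtype.borelSpace _
    have hScount : ¬ Countable S := by rw [Set.countable_coe_iff]; exact hunc
    have hRcount : ¬ Countable ℝ := fun h => (Cardinal.not_countable_real) (Set.countable_univ)
    let e : ℝ ≃ᵐ S := PolishSpace.measurableEquivOfNotCountable hRcount hScount
    let μ₀ : Measure ℝ := volume.restrict (Set.Icc (0:ℝ) 1)
    let μ₁ : Measure S := μ₀.map e
    let μ : Measure X := μ₁.map (Subtype.val)
    have hemb : MeasurableEmbedding ((↑) : S → X) := MeasurableEmbedding.subtype_coe hSmeas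
    have hμ_apply : ∀ t : Set X, μ t = μ₀ (e ⁻¹' (Subtype.val ⁻¹' t)) := by
      intro t
      rw [show μ = μ₁.map Subtype.val from rfl, hemb.map_apply,
        show μ₁ = μ₀.map e from rfl, e.map_apply]
    have hatom : ∀ z : X, μ {z} = 0 := by
      intro z
      rw [hμ_apply]
      have hsub : (e ⁻¹' (Subtype.val ⁻¹' {z})).Subsingleton :=
        ((Set.subsingleton_singleton).preimage Subtype.val_injective).preimage e.injective
      exact hsub.measure_zero μ₀
    have hμS : μ S = 1 := by
      rw [hμ_apply]
      have : Subtype.val ⁻¹' S = (Set.univ : Set S) := by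
        ext y; simp [y.2]
      rw [this]
      simp [μ₀, Real.volume_Icc]
    -- for each x ∈ S, an open neighborhood V x with S ∩ V x ⊆ Gamma f (δ x) x
    choose δ hδpos hδ using hexp
    set V : X → Set X := fun x =>
      ⋂ j ∈ Finset.range m, (fun y : X => (f ^ (j : ℤ)) y) ⁻¹' Metric.ball ((f ^ (j : ℤ)) x) (δ x)
      with hV
    have hVopen : ∀ x, IsOpen (V x) :=
      fun x => isOpen_biInter_finset fun j _ => (Metric.isOpen_ball).preimage (hcont j)
    have hVmem : ∀ x, x ∈ V x := by
      intro x
      simp only [hV, Set.mem_iInter, Set.mem_preimage, Metric.mem_ball]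
      intro j _
      simpa using hδpos x
    have hGam : ∀ x ∈ S, S ∩ V x ⊆ Gamma f (δ x) x := by
      intro x hx y hy n
      have hyS : (f ^ (m : ℤ)) y = y := hy.1
      have hxS : (f ^ (m : ℤ)) x = x := hx
      rw [zpow_reduce f hxS n, zpow_reduce f hyS n]
      have hmpos : (0:ℤ) < (m:ℤ) := by exact_mod_cast hm
      have h0 : 0 ≤ n % (m:ℤ) := Int.emod_nonneg n (by omega)
      have h1 : n % (m:ℤ) < (m:ℤ) := Int.emod_lt_of_pos n hmpos
      set j : ℕ := (n % (m:ℤ)).toNat with hj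
      have hjm : j < m := by omega
      have hjcast : ((j : ℤ)) = n % (m:ℤ) := Int.toNat_of_nonneg h0
      have := hy.2
      simp only [hV, Set.mem_iInter, Set.mem_preimage, Metric.mem_ball] at this
      have hd := this j (Finset.mem_range.2 hjm)
      rw [hjcast] at hd
      rw [dist_comm] at hd
      exact le_of_lt hd
    -- countable subcover
    obtain ⟨t, hts, htc, htcover⟩ := TopologicalSpace.countable_cover_nhdsWithin
      (f := V) (s := S) (fun x hx => nhdsWithin_le_nhds ((hVopen x).mem_nhds (hVmem x)))
    have hzero : μ S ≤ 0 := by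
      have hsub : S ⊆ ⋃ x ∈ t, S ∩ V x := fun y hy => by
        obtain ⟨x, hx, hxV⟩ := Set.mem_iUnion₂.1 (htcover hy)
        exact Set.mem_iUnion₂.2 ⟨x, hx, hy, hxV⟩
      calc μ S ≤ μ (⋃ x ∈ t, S ∩ V x) := measure_mono hsub
        _ ≤ ∑' x : t, μ (S ∩ V x.1) := measure_biUnion_le μ htc _
        _ = 0 := by
            refine ENNReal.tsum_eq_zero.2 fun x => ?_
            exact measure_mono_null (hGam x.1 (hts x.2)) (hδ x.1 μ hatom)
    rw [hμS] at hzero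
    simp at hzero
  have : PerSet f = ⋃ m ∈ {m : ℕ | 1 ≤ m}, {x : X | (f ^ (m : ℤ)) x = x} := by
    ext x; simp [PerSet]
  rw [this]
  exact Set.Countable.biUnion (Set.to_countable _) fun m hm => key m hm
end

section
/- Let f be a bi-measurable bijection of a separable metric space X, and μ a pointwise expansive outer regular measure for f. Then for any p, q ∈ X, the set A_f(p,q) of points positively asymptotic to p and negatively asymptotic to q has μ-measure zero. -/
open MeasureTheory

/-- `A_f(p, q)`: points positively asymptotic to `p` and negatively asymptotic to `q`. -/
def asymptoticSet {X : Type*} [MetricSpace X] (f : Equiv.Perm X) (p q : X) : Set X :=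
  {y | (∀ ε > 0, ∃ N : ℕ, ∀ n : ℤ, (N : ℤ) ≤ n → dist ((f ^ n) p) ((f ^ n) y) < ε) ∧
    (∀ ε > 0, ∃ M : ℕ, ∀ n : ℤ, n ≤ -(M : ℤ) → dist ((f ^ n) q) ((f ^ n) y) < ε)}

theorem stmt_9 {X : Type*} [MetricSpace X] [TopologicalSpace.SeparableSpace X]
    [MeasurableSpace X] [BorelSpace X]
    (f : Equiv.Perm X) (μ : Measure X) [μ.OuterRegular]
    (hμna : ∀ x : X, μ {x} = 0)
    (hexp : ∀ x : X, ∃ δ > 0, μ (Gamma f δ x) = 0)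
    (p q : X) :
    μ (asymptoticSet f p q) = 0 := by
  classical
  have hne : Nonempty X := ⟨p⟩
  obtain ⟨D, hD⟩ := TopologicalSpace.exists_dense_seq X
  -- For a fixed positive δ and thresholds N, M, the corresponding piece is null.
  have inner : ∀ δ : ℝ, 0 < δ → ∀ N M : ℕ,
      μ {y | μ (Gamma f δ y) = 0 ∧
        (∀ n : ℤ, (N : ℤ) ≤ n → dist ((f ^ n) p) ((f ^ n) y) < δ / 2) ∧
        (∀ n : ℤ, n ≤ -(M : ℤ) → dist ((f ^ n) q) ((f ^ n) y) < δ / 2)} = 0 := by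
    intro δ hδ N M
    have hδ2 : 0 < δ / 2 := by linarith
    set S : Set X := {y | μ (Gamma f δ y) = 0 ∧
        (∀ n : ℤ, (N : ℤ) ≤ n → dist ((f ^ n) p) ((f ^ n) y) < δ / 2) ∧
        (∀ n : ℤ, n ≤ -(M : ℤ) → dist ((f ^ n) q) ((f ^ n) y) < δ / 2)} with hS
    -- cells indexed by tuples of dense-sequence indices
    set Cell : (Fin (N + M + 1) → ℕ) → Set X := fun c =>
      {y | y ∈ S ∧ ∀ i : Fin (N + M + 1),
        dist ((f ^ ((i : ℤ) - (M : ℤ))) y) (D (c i)) < δ / 2} with hCell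
    have hcover : S ⊆ ⋃ c : Fin (N + M + 1) → ℕ, Cell c := by
      intro y hy
      have h : ∀ i : Fin (N + M + 1), ∃ k : ℕ,
          dist ((f ^ ((i : ℤ) - (M : ℤ))) y) (D k) < δ / 2 := fun i =>
        hD.exists_dist_lt _ hδ2
      choose c hc using h
      exact Set.mem_iUnion.2 ⟨c, hy, hc⟩
    refine measure_mono_null hcover (measure_iUnion_null fun c => ?_)
    rcases Set.eq_empty_or_nonempty (Cell c) with he | ⟨y₀, hy₀⟩
    · simp [he]
    · refine measure_mono_null ?_ hy₀.1.1
      rintro z ⟨hzS, hzc⟩ n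
      show dist ((f ^ n) y₀) ((f ^ n) z) ≤ δ
      by_cases h1 : (N : ℤ) ≤ n
      · have a1 := hy₀.1.2.1 n h1
        have a2 := hzS.2.1 n h1
        calc dist ((f ^ n) y₀) ((f ^ n) z)
            ≤ dist ((f ^ n) y₀) ((f ^ n) p) + dist ((f ^ n) p) ((f ^ n) z) :=
              dist_triangle _ _ _
          _ ≤ δ := by rw [dist_comm ((f ^ n) y₀)] ; linarith
      · by_cases h2 : n ≤ -(M : ℤ)
        · have a1 := hy₀.1.2.2 n h2
          have a2 := hzS.2.2 n h2
          calc dist ((f ^ n) y₀) ((f ^ n) z)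
              ≤ dist ((f ^ n) y₀) ((f ^ n) q) + dist ((f ^ n) q) ((f ^ n) z) :=
                dist_triangle _ _ _
            _ ≤ δ := by rw [dist_comm ((f ^ n) y₀)] ; linarith
        · push_neg at h1 h2
          have hnn : 0 ≤ n + (M : ℤ) := by linarith
          have hlt : (n + (M : ℤ)).toNat < N + M + 1 := by
            omega
          set i : Fin (N + M + 1) := ⟨(n + (M : ℤ)).toNat, hlt⟩ with hi
          have hival : (i : ℤ) - (M : ℤ) = n := by
            simp only [hi]
            omega
          have a1 := hy₀.2 i
          have a2 := hzc i
          rw [hival] at a1 a2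
          calc dist ((f ^ n) y₀) ((f ^ n) z)
              ≤ dist ((f ^ n) y₀) (D (c i)) + dist (D (c i)) ((f ^ n) z) :=
                dist_triangle _ _ _
            _ ≤ δ := by rw [dist_comm ((f ^ n) z) (D (c i))] at a2 ; linarith
  -- Cover the asymptotic set by countably many such pieces.
  have cover : asymptoticSet f p q ⊆ ⋃ t : ℚ × ℕ × ℕ,
      {y | 0 < (t.1 : ℝ) ∧ μ (Gamma f (t.1 : ℝ) y) = 0 ∧
        (∀ n : ℤ, (t.2.1 : ℤ) ≤ n → dist ((f ^ n) p) ((f ^ n) y) < (t.1 : ℝ) / 2) ∧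
        (∀ n : ℤ, n ≤ -(t.2.2 : ℤ) → dist ((f ^ n) q) ((f ^ n) y) < (t.1 : ℝ) / 2)} := by
    intro y hy
    obtain ⟨δ₀, hδ₀, hG⟩ := hexp y
    obtain ⟨δ, hδpos, hδlt⟩ := exists_rat_btwn hδ₀
    have hδpos' : (0 : ℝ) < (δ : ℝ) := hδpos
    obtain ⟨N, hN⟩ := hy.1 ((δ : ℝ) / 2) (by linarith)
    obtain ⟨M, hM⟩ := hy.2 ((δ : ℝ) / 2) (by linarith)
    have hsub : Gamma f (δ : ℝ) y ⊆ Gamma f δ₀ y := fun z hz n => le_trans (hz n) hδlt.le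
    simp only [Set.mem_iUnion, Set.mem_setOf_eq]
    exact ⟨(δ, N, M), hδpos', measure_mono_null hsub hG, hN, hM⟩
  refine measure_mono_null cover (measure_iUnion_null fun t => ?_)
  by_cases h : 0 < ((t.1 : ℝ))
  · refine measure_mono_null ?_ (inner (t.1 : ℝ) h t.2.1 t.2.2)
    intro y hy
    exact ⟨hy.2.1, hy.2.2.1, hy.2.2.2⟩
  · refine measure_mono_null (fun y hy => (h hy.1).elim) (measure_empty)
end

section
/- Every stable set W^s(x) of a measurable map f on a separable metric space X has measure zero with respect to any positively pointwise expansive outer regular Borel measure μ. -/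
open MeasureTheory

/-- The stable set of `x` under `f`. -/
def stableSet {X : Type*} [MetricSpace X] (f : X → X) (x : X) : Set X :=
  {y | ∀ ε > 0, ∃ n : ℕ, ∀ i : ℕ, n ≤ i → dist (f^[i] x) (f^[i] y) ≤ ε}

theorem stmt_10 {X : Type*} [MetricSpace X] [TopologicalSpace.SeparableSpace X]
    [MeasurableSpace X] [BorelSpace X]
    (f : X → X) (hf : Measurable f)
    (μ : Measure X) [μ.OuterRegular]
    (hμna : ∀ x : X, μ {x} = 0)
    (hexp : ∀ x : X, ∃ δ > 0,
      μ {y | ∀ n : ℕ, dist (f^[n] x) (f^[n] y) ≤ δ} = 0)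
    (x : X) :
    μ (stableSet f x) = 0 := by
  classical
  have : Nonempty X := ⟨x⟩
  obtain ⟨u, hu⟩ := TopologicalSpace.exists_dense_seq X
  let T : (Σ N : ℕ, (Fin N → ℕ) × ℕ) → Set X := fun p =>
    {z | (∀ i : Fin p.1, dist (f^[(i : ℕ)] z) (u (p.2.1 i)) < 1/(2*((p.2.2 : ℝ)+1))) ∧
         ∀ i : ℕ, p.1 ≤ i → dist (f^[i] x) (f^[i] z) ≤ 1/(2*((p.2.2 : ℝ)+1))}
  let T' : (Σ N : ℕ, (Fin N → ℕ) × ℕ) → Set X := fun p => if μ (T p) = 0 then T p else ∅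
  have hT'null : ∀ p, μ (T' p) = 0 := by
    intro p
    by_cases h : μ (T p) = 0 <;> simp [T', h]
  have hcover : stableSet f x ⊆ ⋃ p, T' p := by
    intro y hy
    obtain ⟨δ, hδ, hnull⟩ := hexp y
    obtain ⟨m, hm⟩ := exists_nat_one_div_lt hδ
    have hm1 : (0:ℝ) < (m:ℝ)+1 := by positivity
    set r : ℝ := 1/(2*((m:ℝ)+1)) with hr
    have hr0 : 0 < r := by positivity
    have hrr : r + r = 1/((m:ℝ)+1) := by
      rw [hr]; field_simp
      norm_num
    obtain ⟨N, hN⟩ := hy r hr0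
    have hc : ∀ i : Fin N, ∃ k, dist (f^[(i : ℕ)] y) (u k) < r := fun i =>
      hu.exists_dist_lt _ hr0
    choose c hcd using hc
    have hmem : y ∈ T ⟨N, c, m⟩ := ⟨hcd, hN⟩
    have hTnull : μ (T ⟨N, c, m⟩) = 0 := by
      refine measure_mono_null ?_ hnull
      intro z hz n
      rcases lt_or_ge n N with h | h
      · have h1 := hcd ⟨n, h⟩
        have h2 := hz.1 ⟨n, h⟩
        have : dist (f^[n] y) (f^[n] z)
            ≤ dist (f^[n] y) (u (c ⟨n, h⟩)) + dist (u (c ⟨n, h⟩)) (f^[n] z) :=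
          dist_triangle _ _ _
        rw [dist_comm (u _)] at this
        have hle : dist (f^[n] y) (f^[n] z) ≤ r + r := by
          exact this.trans (add_le_add h1.le h2.le)
        linarith [hrr ▸ hle, hm]
      · have h1 := hN n h
        have h2 := hz.2 n h
        have : dist (f^[n] y) (f^[n] z)
            ≤ dist (f^[n] x) (f^[n] y) + dist (f^[n] x) (f^[n] z) := by
          rw [dist_comm (f^[n] x) (f^[n] y)]; exact dist_triangle _ _ _
        have hle : dist (f^[n] y) (f^[n] z) ≤ r + r := this.trans (add_le_add h1 h2)
        linarith [hrr ▸ hle, hm]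
    refine Set.mem_iUnion.mpr ⟨⟨N, c, m⟩, ?_⟩
    simp only [T', if_pos hTnull]
    exact hmem
  exact measure_mono_null hcover (measure_iUnion_null hT'null)
end

section
/- If a bi-measurable bijection f on a metric space X has canonical coordinates and admits a strictly positive positively pointwise expansive Borel measure μ, then no point of X is a sink. -/
open MeasureTheory

/-- The local stable set `W^s(x, ε)` of `x` under a bijection `f`. -/
def localStable {X : Type*} [MetricSpace X] (f : Equiv.Perm X) (x : X) (ε : ℝ) : Set X :=
  {y | ∀ i : ℕ, dist ((f ^ (i : ℤ)) x) ((f ^ (i : ℤ)) y) ≤ ε}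

/-- The local unstable set `W^u(x, ε)` of `x` under a bijection `f`. -/
def localUnstable {X : Type*} [MetricSpace X] (f : Equiv.Perm X) (x : X) (ε : ℝ) : Set X :=
  {y | ∀ i : ℕ, dist ((f ^ (-(i : ℤ))) x) ((f ^ (-(i : ℤ))) y) ≤ ε}

theorem stmt_11 {X : Type*} [MetricSpace X] [MeasurableSpace X] [BorelSpace X]
    (f : Equiv.Perm X)
    (hcc : ∀ ε > 0, ∃ δ > 0, ∀ x y : X, dist x y < δ →
      (localStable f x ε ∩ localUnstable f y ε).Nonempty)
    (μ : Measure X)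
    (hpos : ∀ U : Set X, IsOpen U → U.Nonempty → 0 < μ U)
    (hexp : ∀ x : X, ∃ δ > 0, μ (localStable f x δ) = 0) :
    ∀ x : X, ¬ ∃ δ > 0, localUnstable f x δ = {x} := by
  rintro x ⟨δ, hδ, hδu⟩
  obtain ⟨δe, hδe, hμ0⟩ := hexp x
  have hεpos : 0 < min δ δe := lt_min hδ hδe
  obtain ⟨δ₀, hδ₀, h⟩ := hcc _ hεpos
  have hball : Metric.ball x δ₀ ⊆ localStable f x δe := by
    intro y hy
    obtain ⟨z, hzs, hzu⟩ := h y x (Metric.mem_ball.mp hy)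
    have hzx : z = x := by
      have hz : z ∈ localUnstable f x δ :=
        fun i => le_trans (hzu i) (min_le_left _ _)
      rw [hδu] at hz
      exact hz
    intro i
    have hi := hzs i
    rw [hzx] at hi
    calc dist ((f ^ (i : ℤ)) x) ((f ^ (i : ℤ)) y)
        = dist ((f ^ (i : ℤ)) y) ((f ^ (i : ℤ)) x) := dist_comm _ _
      _ ≤ min δ δe := hi
      _ ≤ δe := min_le_right _ _
  have h1 : 0 < μ (Metric.ball x δ₀) :=
    hpos _ Metric.isOpen_ball ⟨x, Metric.mem_ball_self hδ₀⟩
  have h2 : μ (Metric.ball x δ₀) = 0 :=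
    le_antisymm (hμ0 ▸ measure_mono hball) zero_le
  exact absurd h2 (ne_of_gt h1)
end

section
/- If a bi-measurable map f on a metric space X is pointwise N-expansive, then f is pointwise expansive. -/
theorem stmt_13 {X : Type*} [MetricSpace X] (f : Equiv.Perm X) (N : ℕ)
    (hN : ∀ x : X, ∃ δ > 0, (Gamma f δ x).encard ≤ N) :
    ∀ x : X, ∃ ε > 0, Gamma f ε x = {x} := by
  intro x
  obtain ⟨δ, hδ, hcard⟩ := hN x
  have hfin : (Gamma f δ x).Finite := Set.finite_of_encard_le_coe hcard
  have hxmem : ∀ ε : ℝ, 0 < ε → x ∈ Gamma f ε x := by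
    intro ε hε n
    simp [hε.le]
  have hTfin : ((Gamma f δ x) \ {x}).Finite := hfin.diff
  by_cases hT : ((Gamma f δ x) \ {x}) = ∅
  · refine ⟨δ, hδ, ?_⟩
    apply Set.eq_singleton_iff_unique_mem.mpr ⟨hxmem δ hδ, fun y hy => ?_⟩
    by_contra hne
    have : y ∈ (Gamma f δ x) \ {x} := ⟨hy, hne⟩
    simp [hT] at this
  · have hne : hTfin.toFinset.Nonempty := by
      rw [Finset.nonempty_iff_ne_empty]
      intro h
      apply hT
      rw [← hTfin.coe_toFinset, h]
      simp
    set m := hTfin.toFinset.inf' hne (fun y => dist x y) with hm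
    have hmpos : 0 < m := by
      rw [hm, Finset.lt_inf'_iff]
      intro y hy
      rw [Set.Finite.mem_toFinset] at hy
      have : y ≠ x := hy.2
      exact dist_pos.mpr (Ne.symm this)
    have hεpos : 0 < min δ (m / 2) := lt_min hδ (by linarith)
    refine ⟨min δ (m / 2), hεpos, ?_⟩
    apply Set.eq_singleton_iff_unique_mem.mpr ⟨hxmem _ hεpos, fun y hy => ?_⟩
    by_contra hney
    have hyδ : y ∈ Gamma f δ x := fun n => (hy n).trans (min_le_left _ _)
    have hyT : y ∈ hTfin.toFinset := by
      rw [Set.Finite.mem_toFinset]; exact ⟨hyδ, hney⟩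
    have h1 : m ≤ dist x y := Finset.inf'_le _ hyT
    have h2 : dist x y ≤ min δ (m / 2) := by
      have := hy 0
      simpa using this
    have h3 : min δ (m / 2) ≤ m / 2 := min_le_right _ _
    linarith
end

section
/- Every specification point of a continuous map f on a metric space X is a topologically mixing point of f. -/
/-- `x` is a specification point of `f`. -/
def SpecPoint {X : Type*} [MetricSpace X] (f : X → X) (x : X) : Prop :=
  ∀ ε > 0, ∃ M : ℕ, ∀ (k : ℕ) (xs : ℕ → X) (a b : ℕ → ℕ), 1 ≤ k → xs 1 = x →
    (∀ j, 1 ≤ j → j ≤ k → a j ≤ b j) →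
    (∀ j, 2 ≤ j → j ≤ k → b (j - 1) + M ≤ a j) →
    ∃ y : X, ∀ j, 1 ≤ j → j ≤ k → ∀ i, a j ≤ i → i ≤ b j →
      dist (f^[i] y) (f^[i] (xs j)) < ε

/-- `x` is a topologically mixing point of `f`. -/
def MixingPoint {X : Type*} [MetricSpace X] (f : X → X) (x : X) : Prop :=
  ∀ U : Set X, IsOpen U → x ∈ U → ∀ V : Set X, IsOpen V → V.Nonempty →
    ∃ N : ℕ, ∀ n : ℕ, N ≤ n → (f^[n] '' U ∩ V).Nonempty

theorem stmt_15 {X : Type*} [MetricSpace X] (f : X → X) (hf : Continuous f)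
    (hsurj : Function.Surjective f) (x : X) (hx : SpecPoint f x) :
    MixingPoint f x := by
  intro U hU hxU V hV ⟨v, hvV⟩
  obtain ⟨ε1, hε1, hball1⟩ := Metric.isOpen_iff.mp hU x hxU
  obtain ⟨ε2, hε2, hball2⟩ := Metric.isOpen_iff.mp hV v hvV
  set ε := min ε1 ε2 with hε
  have hεpos : 0 < ε := lt_min hε1 hε2
  obtain ⟨M, hM⟩ := hx ε hεpos
  refine ⟨M, fun n hn => ?_⟩
  obtain ⟨z, hz⟩ : ∃ z, f^[n] z = v := (hsurj.iterate n) v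
  obtain ⟨y, hy⟩ := hM 2 (fun j => if j = 2 then z else x)
    (fun j => if j = 2 then n else 0) (fun j => if j = 2 then n else 0)
    (by norm_num) (by norm_num)
    (fun j _ _ => le_refl _)
    (by
      intro j h2 hk
      interval_cases j
      simpa using hn)
  have h1 := hy 1 le_rfl (by norm_num) 0 (by norm_num) (by norm_num)
  have h2 := hy 2 (by norm_num) le_rfl n (by norm_num) (by norm_num)
  norm_num at h2
  norm_num at h1
  refine ⟨f^[n] y, ⟨y, hball1 ?_, rfl⟩, hball2 ?_⟩
  · exact Metric.mem_ball.mpr (lt_of_lt_of_le h1 (min_le_left _ _))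
  · rw [hz] at h2
    exact Metric.mem_ball.mpr (lt_of_lt_of_le h2 (min_le_right _ _))
end

section
/- If f is a topologically mixing continuous map on a totally bounded metric space X, then every shadowable point of f is a specification point of f. -/
/-- `x` is a shadowable point of `f`: every pseudo-orbit through `x` can be traced. -/
def ShadowablePoint {X : Type*} [MetricSpace X] (f : X → X) (x : X) : Prop :=
  ∀ ε > 0, ∃ δ > 0, ∀ u : ℕ → X, u 0 = x →
    (∀ i : ℕ, dist (f (u i)) (u (i + 1)) < δ) →
    ∃ z : X, ∀ i : ℕ, dist (f^[i] z) (u i) < ε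

theorem stmt_18 {X : Type*} [MetricSpace X] (f : X → X) (hf : Continuous f)
    (htb : TotallyBounded (Set.univ : Set X))
    (hmix : ∀ U V : Set X, IsOpen U → IsOpen V → U.Nonempty → V.Nonempty →
      ∃ N : ℕ, ∀ n : ℕ, N ≤ n → (f^[n] '' U ∩ V).Nonempty)
    (x : X) (hx : ShadowablePoint f x) :
    SpecPoint f x := by
  classical
  intro ε hε
  obtain ⟨δ, hδ, hsh⟩ := hx ε hε
  have hδ4 : (0:ℝ) < δ/4 := by linarith
  have hδ2 : δ/2 < δ := by linarith
  obtain ⟨t, htfin, htcov⟩ := Metric.totallyBounded_iff.mp htb (δ/4) hδ4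
  have hcov : ∀ p : X, ∃ c, c ∈ t ∧ dist p c < δ/4 := by
    intro p
    have := htcov (Set.mem_univ p)
    simp only [Set.mem_iUnion] at this
    obtain ⟨c, hc, hball⟩ := this
    exact ⟨c, hc, Metric.mem_ball.mp hball⟩
  choose cf hcf1 hcf2 using hcov
  have hN : ∀ c c' : X, ∃ N : ℕ, ∀ n, N ≤ n →
      (f^[n] '' Metric.ball c (δ/4) ∩ Metric.ball c' (δ/4)).Nonempty := fun c c' =>
    hmix _ _ Metric.isOpen_ball Metric.isOpen_ball ⟨c, Metric.mem_ball_self hδ4⟩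
      ⟨c', Metric.mem_ball_self hδ4⟩
  choose N hNs using hN
  set M : ℕ := 2 + Finset.sup (htfin.toFinset ×ˢ htfin.toFinset) (fun p => N p.1 p.2)
    with hMdef
  have hM2 : 2 ≤ M := Nat.le_add_right 2 _
  have hNM : ∀ p q : X, N (cf p) (cf q) + 2 ≤ M := by
    intro p q
    have hmem : (cf p, cf q) ∈ htfin.toFinset ×ˢ htfin.toFinset := by
      simp only [Finset.mem_product, Set.Finite.mem_toFinset]
      exact ⟨hcf1 p, hcf1 q⟩
    have h2 : N (cf p) (cf q) ≤
        Finset.sup (htfin.toFinset ×ˢ htfin.toFinset) (fun p => N p.1 p.2) :=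
      Finset.le_sup (f := fun p : X × X => N p.1 p.2) hmem
    omega
  refine ⟨M, ?_⟩
  intro k xs a b hk hxs1 hab hgap
  have hgap' : ∀ j, 1 ≤ j → j + 1 ≤ k → b j + M ≤ a (j + 1) := by
    intro j h1 h2
    simpa using hgap (j+1) (by omega) h2
  -- monotonicity facts
  have hmono : ∀ j j', 1 ≤ j → j < j' → j' ≤ k → b j + M ≤ a j' := by
    intro j j' hj hjj'
    induction j', hjj' using Nat.le_induction with
    | base => intro h1k; exact hgap' j hj h1k
    | succ m hm ih =>
      intro hmk
      have h1 := hgap' m (by omega) hmk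
      have h2 := hab m (by omega) (by omega)
      have h3 := ih (by omega)
      omega
  have hamono : ∀ j j', 1 ≤ j → j ≤ j' → j' ≤ k → a j ≤ a j' := by
    intro j j' hj hjj' hj'k
    rcases eq_or_lt_of_le hjj' with rfl | h
    · exact le_rfl
    · have h1 := hmono j j' hj h hj'k
      have h2 := hab j hj (by omega)
      omega
  have hbmono : ∀ j j', 1 ≤ j → j ≤ j' → j' ≤ k → b j ≤ b j' := by
    intro j j' hj hjj' hj'k
    rcases eq_or_lt_of_le hjj' with rfl | h
    · exact le_rfl
    · have h1 := hmono j j' hj h hj'k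
      have h2 := hab j' (by omega) hj'k
      omega
  -- choose bridge points from mixing
  have hw : ∀ j : ℕ, ∃ wj : X, 1 ≤ j → j + 1 ≤ k →
      dist (f^[b j + 1] (xs j)) wj < δ/2 ∧
      dist (f^[a (j+1) - (b j + 1)] wj) (f^[a (j+1)] (xs (j+1))) < δ/2 := by
    intro j
    by_cases hj : 1 ≤ j ∧ j + 1 ≤ k
    · obtain ⟨hj1, hjk⟩ := hj
      set p := f^[b j + 1] (xs j) with hp
      set q := f^[a (j+1)] (xs (j+1)) with hq
      have hgapj := hgap' j hj1 hjk
      have hNle : N (cf p) (cf q) ≤ a (j+1) - (b j + 1) := by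
        have := hNM p q; omega
      obtain ⟨pt, hpt⟩ := hNs (cf p) (cf q) _ hNle
      obtain ⟨⟨wj, hwU, hwim⟩, hpV⟩ := hpt
      refine ⟨wj, fun _ _ => ⟨?_, ?_⟩⟩
      · have h1 := hcf2 p
        have h2 : dist (cf p) wj < δ/4 := by
          rw [dist_comm]; exact Metric.mem_ball.mp hwU
        calc dist p wj ≤ dist p (cf p) + dist (cf p) wj := dist_triangle _ _ _
          _ < δ/4 + δ/4 := by linarith
          _ = δ/2 := by ring
      · rw [hwim]
        have h1 : dist pt (cf q) < δ/4 := Metric.mem_ball.mp hpV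
        have h2 : dist (cf q) q < δ/4 := by
          rw [dist_comm]; exact hcf2 q
        calc dist pt q ≤ dist pt (cf q) + dist (cf q) q := dist_triangle _ _ _
          _ < δ/4 + δ/4 := by linarith
          _ = δ/2 := by ring
    · exact ⟨x, fun h1 h2 => absurd ⟨h1, h2⟩ hj⟩
  choose w hwspec using hw
  -- the index of the active segment
  set J : ℕ → ℕ := fun i => max 1 (((Finset.Icc 1 k).filter (fun j => a j ≤ i)).sup id)
    with hJdef
  have hJeq : ∀ j i, 1 ≤ j → j ≤ k → a j ≤ i → (∀ j', j < j' → j' ≤ k → i < a j') →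
      J i = j := by
    intro j i hj1 hjk hai hub
    have hle : ((Finset.Icc 1 k).filter (fun j => a j ≤ i)).sup id ≤ j := by
      apply Finset.sup_le
      intro j' hj'
      simp only [Finset.mem_filter, Finset.mem_Icc] at hj'
      show j' ≤ j
      by_contra h
      exact absurd hj'.2 (not_le.mpr (hub j' (by omega) hj'.1.2))
    have hge : j ≤ ((Finset.Icc 1 k).filter (fun j => a j ≤ i)).sup id := by
      apply Finset.le_sup (f := id)
      simp only [Finset.mem_filter, Finset.mem_Icc]
      exact ⟨⟨hj1, hjk⟩, hai⟩
    have hS : ((Finset.Icc 1 k).filter (fun j => a j ≤ i)).sup id = j :=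
      le_antisymm hle hge
    simp only [hJdef, hS]
    exact max_eq_right hj1
  -- the pseudo-orbit
  set u : ℕ → X := fun i =>
    if h : ∃ j, 1 ≤ j ∧ j + 1 ≤ k ∧ b j < i ∧ i < a (j + 1) then
      f^[i - (b h.choose + 1)] (w h.choose)
    else f^[i] (xs (J i)) with hudef
  have huniq : ∀ i j j', (1 ≤ j ∧ j + 1 ≤ k ∧ b j < i ∧ i < a (j+1)) →
      (1 ≤ j' ∧ j' + 1 ≤ k ∧ b j' < i ∧ i < a (j'+1)) → j = j' := by
    intro i j j' hj hj'
    obtain ⟨hj1, hjk, hbj, haj⟩ := hj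
    obtain ⟨hj'1, hj'k, hbj', haj'⟩ := hj'
    rcases lt_trichotomy j j' with h | h | h
    · have h1 : a (j+1) ≤ a j' := hamono (j+1) j' (by omega) (by omega) (by omega)
      have h2 : a j' ≤ b j' := hab j' hj'1 (by omega)
      omega
    · exact h
    · have h1 : a (j'+1) ≤ a j := hamono (j'+1) j (by omega) (by omega) (by omega)
      have h2 : a j ≤ b j := hab j hj1 (by omega)
      omega
  have hu_orb : ∀ j i, 1 ≤ j → j ≤ k → a j ≤ i → i ≤ b j → u i = f^[i] (xs j) := by
    intro j i hj1 hjk hai hib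
    have hnP : ¬ ∃ j', 1 ≤ j' ∧ j' + 1 ≤ k ∧ b j' < i ∧ i < a (j' + 1) := by
      rintro ⟨j', h1, h2, h3, h4⟩
      rcases Nat.lt_or_ge j' j with h | h
      · -- j' + 1 ≤ j
        have : a (j'+1) ≤ a j := hamono (j'+1) j (by omega) (by omega) hjk
        omega
      · -- j ≤ j'
        have : b j ≤ b j' := hbmono j j' hj1 h (by omega)
        omega
    have hJ : J i = j := hJeq j i hj1 hjk hai (fun j' hlt hle => by
      have := hmono j j' hj1 hlt hle; omega)
    simp only [hudef]
    rw [dif_neg hnP, hJ]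
  have hu_seg1 : ∀ i, i ≤ b 1 → u i = f^[i] (xs 1) := by
    intro i hi
    have hnP : ¬ ∃ j', 1 ≤ j' ∧ j' + 1 ≤ k ∧ b j' < i ∧ i < a (j' + 1) := by
      rintro ⟨j', h1, h2, h3, h4⟩
      have : b 1 ≤ b j' := hbmono 1 j' le_rfl h1 (by omega)
      omega
    have hsup : ((Finset.Icc 1 k).filter (fun j => a j ≤ i)).sup id ≤ 1 := by
      apply Finset.sup_le
      intro j' hj'
      simp only [Finset.mem_filter, Finset.mem_Icc] at hj'
      show j' ≤ 1
      by_contra h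
      have := hmono 1 j' le_rfl (by omega) hj'.1.2
      omega
    have hJ : J i = 1 := by
      simp only [hJdef]
      omega
    simp only [hudef]
    rw [dif_neg hnP, hJ]
  have hu_tail : ∀ i, b k ≤ i → u i = f^[i] (xs k) := by
    intro i hi
    have hnP : ¬ ∃ j', 1 ≤ j' ∧ j' + 1 ≤ k ∧ b j' < i ∧ i < a (j' + 1) := by
      rintro ⟨j', h1, h2, h3, h4⟩
      have h5 : a (j'+1) ≤ a k := hamono (j'+1) k (by omega) h2 le_rfl
      have h6 : a k ≤ b k := hab k hk le_rfl
      omega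
    have hJ : J i = k := hJeq k i hk le_rfl (le_trans (hab k hk le_rfl) hi)
      (fun j' hlt hle => by omega)
    simp only [hudef]
    rw [dif_neg hnP, hJ]
  have hu_gap : ∀ j i, 1 ≤ j → j + 1 ≤ k → b j < i → i < a (j + 1) →
      u i = f^[i - (b j + 1)] (w j) := by
    intro j i hj1 hjk hbi hia
    have hP : ∃ j', 1 ≤ j' ∧ j' + 1 ≤ k ∧ b j' < i ∧ i < a (j' + 1) :=
      ⟨j, hj1, hjk, hbi, hia⟩
    have he : hP.choose = j := huniq i hP.choose j hP.choose_spec ⟨hj1, hjk, hbi, hia⟩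
    simp only [hudef]
    rw [dif_pos hP, he]
  -- coverage of ℕ by the regions
  have hcover : ∀ i : ℕ, i < a 1 ∨ b k ≤ i ∨
      (∃ j, 1 ≤ j ∧ j ≤ k ∧ a j ≤ i ∧ i ≤ b j) ∨
      (∃ j, 1 ≤ j ∧ j + 1 ≤ k ∧ b j < i ∧ i < a (j + 1)) := by
    intro i
    by_cases h1 : i < a 1
    · exact Or.inl h1
    by_cases h2 : b k ≤ i
    · exact Or.inr (Or.inl h2)
    push_neg at h1 h2
    have hFne : ((Finset.Icc 1 k).filter (fun j => a j ≤ i)).Nonempty := by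
      refine ⟨1, ?_⟩
      simp only [Finset.mem_filter, Finset.mem_Icc]
      exact ⟨⟨le_rfl, hk⟩, h1⟩
    set j := ((Finset.Icc 1 k).filter (fun j => a j ≤ i)).max' hFne with hjd
    have hjmem := Finset.max'_mem _ hFne
    rw [← hjd] at hjmem
    simp only [Finset.mem_filter, Finset.mem_Icc] at hjmem
    obtain ⟨⟨hj1, hjk⟩, hai⟩ := hjmem
    by_cases hib : i ≤ b j
    · exact Or.inr (Or.inr (Or.inl ⟨j, hj1, hjk, hai, hib⟩))
    · push_neg at hib
      have hjk' : j < k := by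
        rcases eq_or_lt_of_le hjk with heq | h
        · rw [heq] at hib; omega
        · exact h
      have hnotmem : ¬ (a (j+1) ≤ i) := by
        intro hle
        have hmem : j + 1 ∈ (Finset.Icc 1 k).filter (fun j => a j ≤ i) := by
          simp only [Finset.mem_filter, Finset.mem_Icc]
          exact ⟨⟨by omega, by omega⟩, hle⟩
        have := Finset.le_max' _ _ hmem
        omega
      exact Or.inr (Or.inr (Or.inr ⟨j, hj1, by omega, hib, by omega⟩))
  -- pseudo-orbit property
  have hpo : ∀ i, dist (f (u i)) (u (i+1)) < δ := by
    intro i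
    rcases hcover i with hpre | htail | ⟨j, hj1, hjk, hai, hib⟩ | ⟨j, hj1, hjk, hbi, hia⟩
    · have h1 := hab 1 le_rfl hk
      rw [hu_seg1 i (by omega), hu_seg1 (i+1) (by omega), Function.iterate_succ_apply']
      simpa using hδ
    · rw [hu_tail i htail, hu_tail (i+1) (by omega), Function.iterate_succ_apply']
      simpa using hδ
    · rcases Nat.lt_or_ge i (b j) with h | h
      · rw [hu_orb j i hj1 hjk hai hib, hu_orb j (i+1) hj1 hjk (by omega) (by omega),
          Function.iterate_succ_apply']
        simpa using hδ
      · have hieq : i = b j := le_antisymm hib h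
        rcases eq_or_lt_of_le hjk with heq | hlt
        · have hbk : b k ≤ i := by rw [← heq]; omega
          rw [hu_tail i hbk, hu_tail (i+1) (by omega), Function.iterate_succ_apply']
          simpa using hδ
        · have hgj := hgap' j hj1 (by omega)
          rw [hu_orb j i hj1 hjk hai hib,
            hu_gap j (i+1) hj1 (by omega) (by omega) (by omega),
            (show i + 1 - (b j + 1) = 0 by omega), Function.iterate_zero_apply,
            ← Function.iterate_succ_apply' f i (xs j)]
          have h1 := (hwspec j hj1 (by omega)).1
          rw [← hieq] at h1
          exact h1.trans hδ2
    · by_cases h : i + 1 < a (j+1)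
      · rw [hu_gap j i hj1 hjk hbi hia, hu_gap j (i+1) hj1 hjk (by omega) h,
          (show i + 1 - (b j + 1) = (i - (b j + 1)) + 1 by omega),
          Function.iterate_succ_apply']
        simpa using hδ
      · have he : i + 1 = a (j+1) := by omega
        have hab' := hab (j+1) (by omega) hjk
        rw [hu_gap j i hj1 hjk hbi hia, he,
          hu_orb (j+1) (a (j+1)) (by omega) hjk le_rfl hab',
          ← Function.iterate_succ_apply' f (i - (b j + 1)) (w j),
          (show (i - (b j + 1)).succ = a (j+1) - (b j + 1) by omega)]
        exact ((hwspec j hj1 hjk).2).trans hδ2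
  have hu0 : u 0 = x := by
    rw [hu_seg1 0 (Nat.zero_le _), Function.iterate_zero_apply, hxs1]
  obtain ⟨z, hz⟩ := hsh u hu0 hpo
  refine ⟨z, ?_⟩
  intro j hj1 hjk i hai hib
  have := hz i
  rwa [hu_orb j i hj1 hjk hai hib] at this
end
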